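/- Induced homomorphism density as sampling probability: for a complexon W and a finite simplicial complex F with V(F) = [n], t_ind(F, W) = Pr{𝕂(n, W) = F}, where t_ind(F,W) = ∫_{[0,1]^n} ∏_{σ∈F} W(x_σ) ∏_{τ∈antifacets(F)} (1 − W(x_τ)) dx. -/

import Mathlib

open MeasureTheory

noncomputable section

/-- The uniform (Lebesgue) measure on `[0,1]`. -/
def unifI : Measure ℝ := volume.restrict (Set.Icc (0:ℝ) 1)

/-- The product uniform measure on tuples indexed by `ι`. -/
def piUnif (ι : Type*) [Fintype ι] : Measure (ι → ℝ) := Measure.pi fun _ => unifI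

/-- A complexon, encoded as a function on finite multisets of points of `[0,1]`
(the multiset encoding makes total symmetry automatic), with values in `[0,1]`,
equal to `1` on the empty multiset and on singletons, and measurable in each
dimension. -/
structure Complexon where
  toFun : Multiset ℝ → ℝ
  mem_Icc : ∀ m, toFun m ∈ Set.Icc (0:ℝ) 1
  empty_eq_one : toFun 0 = 1
  single_eq_one : ∀ x : ℝ, toFun {x} = 1
  measurable : ∀ d : ℕ, Measurable fun v : Fin (d+1) → ℝ =>
    toFun (Multiset.map v Finset.univ.val)

/-- The multiset of coordinates of a tuple. -/
def mTup {ι : Type*} [Fintype ι] (v : ι → ℝ) : Multiset ℝ :=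
  Multiset.map v Finset.univ.val

/-- The faceted version `Ŵ` of a complexon-like function:
`Ŵ(x₁,…,x_{d+1}) = ∏_{∅ ≠ σ ⊆ [d+1]} W(x_σ)`. -/
def facetFun (W : Multiset ℝ → ℝ) : Multiset ℝ → ℝ :=
  fun m => ((m.powerset.filter (· ≠ 0)).map W).prod

/-- An abstract simplicial complex on a vertex type `V`: a finite family of
finite nonempty subsets of `V` closed under taking nonempty subsets. -/
structure SComplex (V : Type*) [DecidableEq V] where
  faces : Finset (Finset V)
  nonempty_mem : ∀ σ ∈ faces, σ.Nonempty
  down_closed : ∀ σ ∈ faces, ∀ τ ⊆ σ, τ.Nonempty → τ ∈ faces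

variable {V : Type*} [DecidableEq V] [Fintype V]

/-- Facets: the inclusion-maximal faces. -/
def SComplex.facets (F : SComplex V) : Finset (Finset V) :=
  F.faces.filter fun σ => ∀ τ ∈ F.faces, σ ⊆ τ → σ = τ

/-- Antifacets: the inclusion-minimal nonempty non-faces. -/
def SComplex.antifacets (F : SComplex V) : Finset (Finset V) :=
  Finset.univ.filter fun τ =>
    τ.Nonempty ∧ τ ∉ F.faces ∧ ∀ τ' ⊂ τ, τ'.Nonempty → τ' ∈ F.faces

/-- Homomorphism-density-type integral of a family of faces in a
multiset function. -/
def homDensityOn (A : Finset (Finset V)) (W : Multiset ℝ → ℝ) : ℝ :=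
  ∫ x : V → ℝ, ∏ σ ∈ A, W (σ.val.map x) ∂(piUnif V)

/-- Homomorphism density `t(F, W)`. -/
def homDensity (F : SComplex V) (W : Multiset ℝ → ℝ) : ℝ := homDensityOn F.faces W

/-- Induced homomorphism density `t_ind(F, W)`. -/
def indDensity (F : SComplex V) (W : Multiset ℝ → ℝ) : ℝ :=
  ∫ x : V → ℝ,
    (∏ σ ∈ F.faces, W (σ.val.map x)) *
    (∏ τ ∈ F.antifacets, (1 - W (τ.val.map x))) ∂(piUnif V)

/-- `d`-dimensional cut norm of a function on `(d+1)`-tuples. -/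
def cutNormD (d : ℕ) (U : (Fin (d+1) → ℝ) → ℝ) : ℝ :=
  sSup { r | ∃ S : Fin (d+1) → Set ℝ, (∀ i, MeasurableSet (S i)) ∧
    r = |∫ x in Set.univ.pi S, U x ∂(piUnif (Fin (d+1)))| }

/-- `d`-dimensional cut distance between two multiset functions. -/
def cutDistD (d : ℕ) (W₁ W₂ : Multiset ℝ → ℝ) : ℝ :=
  cutNormD d (fun v => W₁ (mTup v) - W₂ (mTup v))

/-- Labeled cut distance with weights `α` (`α j` weights dimension `j`, `j ≥ 1`). -/
def cutDist (α : ℕ → ℝ) (W₁ W₂ : Multiset ℝ → ℝ) : ℝ :=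
  ∑' j : ℕ, α (j+1) * cutDistD (j+1) W₁ W₂

/-- Composition of a multiset function with a point transformation `φ`. -/
def compFun (W : Multiset ℝ → ℝ) (φ : ℝ → ℝ) : Multiset ℝ → ℝ :=
  fun m => W (m.map φ)

/-- Unlabeled cut distance `δ_□(·,·;(α_j))`: infimum over measure-preserving
transformations of `[0,1]`. -/
def uCutDist (α : ℕ → ℝ) (W₁ W₂ : Multiset ℝ → ℝ) : ℝ :=
  sInf { r | ∃ φ : ℝ → ℝ, MeasurePreserving φ unifI unifI ∧
    r = cutDist α W₁ (compFun W₂ φ) }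


instance (n : ℕ) : MeasurableSpace (Finset (Finset (Fin n))) := ⊤

open Classical in
/-- The face set of the random complex `𝕂(n,W)` as a function of the sample
points `x` and the independent uniform labels `u`: a nonempty `σ ⊆ [n]` is a
face iff `u τ ≤ W(x_τ)` for every nonempty `τ ⊆ σ`. -/
def sampleFaces (W : Multiset ℝ → ℝ) (n : ℕ) (x : Fin n → ℝ)
    (u : Finset (Fin n) → ℝ) : Finset (Finset (Fin n)) :=
  Finset.univ.filter fun σ => σ.Nonempty ∧
    ∀ τ ∈ σ.powerset, τ.Nonempty → u τ ≤ W (τ.val.map x)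


instance : IsProbabilityMeasure unifI := ⟨by
  simp [unifI, Measure.restrict_apply MeasurableSet.univ, Real.volume_Icc]⟩

instance (ι : Type*) [Fintype ι] : IsProbabilityMeasure (piUnif ι) := by
  unfold piUnif; infer_instance

lemma unifI_Iic {a : ℝ} (h1 : a ≤ 1) :
    unifI (Set.Iic a) = ENNReal.ofReal a := by
  rw [unifI, Measure.restrict_apply measurableSet_Iic]
  have : Set.Iic a ∩ Set.Icc 0 1 = Set.Icc 0 a := by
    ext y; simp only [Set.mem_inter_iff, Set.mem_Iic, Set.mem_Icc]
    constructor
    · rintro ⟨h, h2, _⟩; exact ⟨h2, h⟩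
    · rintro ⟨h2, h⟩; exact ⟨h, h2, h.trans h1⟩
  rw [this, Real.volume_Icc]; ring_nf

lemma unifI_Ioi {a : ℝ} (h0 : 0 ≤ a) :
    unifI (Set.Ioi a) = ENNReal.ofReal (1 - a) := by
  rw [unifI, Measure.restrict_apply measurableSet_Ioi]
  have : Set.Ioi a ∩ Set.Icc 0 1 = Set.Ioc a 1 := by
    ext y; simp only [Set.mem_inter_iff, Set.mem_Ioi, Set.mem_Ioc, Set.mem_Icc]
    constructor
    · rintro ⟨h, _, h2⟩; exact ⟨h, h2⟩
    · rintro ⟨h, h2⟩; exact ⟨h, h0.trans h.le, h2⟩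
  rw [this, Real.volume_Ioc]

lemma complexon_measurable_face (W : Complexon) {n : ℕ} (σ : Finset (Fin n)) :
    Measurable (fun x : Fin n → ℝ => W.toFun (σ.val.map x)) := by
  rcases Nat.eq_zero_or_eq_succ_pred σ.card with h | h
  · have hσ : σ = ∅ := Finset.card_eq_zero.mp h
    subst hσ
    simpa using measurable_const (a := W.toFun 0)
  · set d := σ.card - 1 with hd
    have hcard : σ.card = d + 1 := h
    set e := σ.orderEmbOfFin hcard with he
    have hmap : Finset.univ.map e.toEmbedding = σ := by
      apply Finset.eq_of_subset_of_card_le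
      · intro a ha
        simp only [Finset.mem_map] at ha
        obtain ⟨i, _, rfl⟩ := ha
        exact σ.orderEmbOfFin_mem hcard i
      · rw [Finset.card_map, Finset.card_univ, Fintype.card_fin, hcard]
    have key : ∀ x : Fin n → ℝ, σ.val.map x
        = Multiset.map (fun i => x (e i)) (Finset.univ : Finset (Fin (d+1))).val := by
      intro x
      conv_lhs => rw [← hmap]
      rw [Finset.map_val, Multiset.map_map]
      rfl
    have : (fun x : Fin n → ℝ => W.toFun (σ.val.map x))
        = (fun v : Fin (d+1) → ℝ => W.toFun (Multiset.map v Finset.univ.val))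
          ∘ (fun x : Fin n → ℝ => fun i => x (e i)) := by
      funext x; simp only [Function.comp_apply, key x]
    rw [this]
    exact (W.measurable d).comp
      (measurable_pi_lambda _ fun i => measurable_pi_apply (e i))

lemma exists_antifacet_subset {n : ℕ} (F : SComplex (Fin n)) :
    ∀ σ : Finset (Fin n), σ.Nonempty → σ ∉ F.faces →
      ∃ τ ∈ F.antifacets, τ ⊆ σ := by
  intro σ
  induction σ using Finset.strongInduction with
  | _ σ ih =>
    intro hne hσ
    by_cases h : ∀ τ' ⊂ σ, τ'.Nonempty → τ' ∈ F.faces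
    · refine ⟨σ, ?_, subset_rfl⟩
      simp only [SComplex.antifacets, Finset.mem_filter, Finset.mem_univ, true_and]
      exact ⟨hne, hσ, h⟩
    · push_neg at h
      obtain ⟨τ', hss, hne', hnf⟩ := h
      obtain ⟨τ, hτ, hsub⟩ := ih τ' hss hne' hnf
      exact ⟨τ, hτ, hsub.trans hss.subset⟩

lemma sampleFaces_eq_iff {n : ℕ} (F : SComplex (Fin n)) (W : Multiset ℝ → ℝ)
    (x : Fin n → ℝ) (u : Finset (Fin n) → ℝ) :
    sampleFaces W n x u = F.faces ↔
      (∀ σ ∈ F.faces, u σ ≤ W (σ.val.map x)) ∧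
      (∀ τ ∈ F.antifacets, W (τ.val.map x) < u τ) := by
  classical
  constructor
  · intro h
    constructor
    · intro σ hσ
      rw [← h] at hσ
      simp only [sampleFaces, Finset.mem_filter, Finset.mem_univ, true_and] at hσ
      exact hσ.2 σ (Finset.mem_powerset.mpr subset_rfl) hσ.1
    · intro τ hτ
      simp only [SComplex.antifacets, Finset.mem_filter, Finset.mem_univ, true_and] at hτ
      obtain ⟨hne, hnf, hmin⟩ := hτ
      have hns : τ ∉ sampleFaces W n x u := h ▸ hnf
      simp only [sampleFaces, Finset.mem_filter, Finset.mem_univ, true_and, not_and,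
        not_forall] at hns
      obtain ⟨ρ, hρ, hρne, hρlt⟩ := hns hne
      push_neg at hρlt
      rcases (Finset.mem_powerset.mp hρ).ssubset_or_eq with hss | rfl
      · exfalso
        have hρf : ρ ∈ F.faces := hmin ρ hss hρne
        have : ρ ∈ sampleFaces W n x u := h ▸ hρf
        simp only [sampleFaces, Finset.mem_filter, Finset.mem_univ, true_and] at this
        exact absurd (this.2 ρ (Finset.mem_powerset.mpr subset_rfl) hρne) (not_le.mpr hρlt)
      · exact hρlt
  · rintro ⟨h1, h2⟩
    ext σ
    simp only [sampleFaces, Finset.mem_filter, Finset.mem_univ, true_and]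
    constructor
    · rintro ⟨hne, hall⟩
      by_contra hσ
      obtain ⟨τ, hτ, hsub⟩ := exists_antifacet_subset F σ hne hσ
      have hτne : τ.Nonempty := by
        simp only [SComplex.antifacets, Finset.mem_filter] at hτ
        exact hτ.2.1
      exact absurd (hall τ (Finset.mem_powerset.mpr hsub) hτne) (not_le.mpr (h2 τ hτ))
    · intro hσ
      refine ⟨F.nonempty_mem σ hσ, fun τ hτ hτne => ?_⟩
      exact h1 τ (F.down_closed σ hσ τ (Finset.mem_powerset.mp hτ) hτne)

lemma antifacets_disjoint_faces {n : ℕ} (F : SComplex (Fin n)) :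
    Disjoint F.faces F.antifacets := by
  rw [Finset.disjoint_left]
  intro σ hσ hσ'
  simp only [SComplex.antifacets, Finset.mem_filter] at hσ'
  exact hσ'.2.2.1 hσ


lemma section_measure {n : ℕ} (F : SComplex (Fin n)) (W : Complexon) (x : Fin n → ℝ) :
    piUnif (Finset (Fin n)) {u : Finset (Fin n) → ℝ |
        (∀ σ ∈ F.faces, u σ ≤ W.toFun (σ.val.map x)) ∧
        (∀ τ ∈ F.antifacets, W.toFun (τ.val.map x) < u τ)}
    = ENNReal.ofReal ((∏ σ ∈ F.faces, W.toFun (σ.val.map x)) *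
        ∏ τ ∈ F.antifacets, (1 - W.toFun (τ.val.map x))) := by
  classical
  set w : Finset (Fin n) → ℝ := fun σ => W.toFun (σ.val.map x) with hw
  have hdisj := antifacets_disjoint_faces F
  set S : Finset (Fin n) → Set ℝ := fun τ =>
    if τ ∈ F.faces then Set.Iic (w τ)
    else if τ ∈ F.antifacets then Set.Ioi (w τ) else Set.univ with hS
  have hset : {u : Finset (Fin n) → ℝ |
      (∀ σ ∈ F.faces, u σ ≤ w σ) ∧ (∀ τ ∈ F.antifacets, w τ < u τ)}
      = Set.pi Set.univ S := by
    ext u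
    simp only [Set.mem_setOf_eq, Set.mem_pi, Set.mem_univ, true_implies]
    constructor
    · rintro ⟨h1, h2⟩ τ
      by_cases hf : τ ∈ F.faces
      · simp [hS, hf, h1 τ hf]
      · by_cases ha : τ ∈ F.antifacets
        · simp [hS, hf, ha, h2 τ ha]
        · simp [hS, hf, ha]
    · intro h
      constructor
      · intro σ hσ
        have := h σ
        simpa [hS, hσ] using this
      · intro τ hτ
        have hnf : τ ∉ F.faces := (Finset.disjoint_right.mp hdisj) hτ
        have := h τ
        simpa [hS, hnf, hτ] using this
  rw [hset]
  have hpi : piUnif (Finset (Fin n)) (Set.pi Set.univ S) = ∏ τ, unifI (S τ) :=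
    Measure.pi_pi _ _
  rw [hpi]
  have hval : ∀ τ : Finset (Fin n), unifI (S τ) =
      if τ ∈ F.faces then ENNReal.ofReal (w τ)
      else if τ ∈ F.antifacets then ENNReal.ofReal (1 - w τ) else 1 := by
    intro τ
    have hmem := W.mem_Icc (τ.val.map x)
    by_cases hf : τ ∈ F.faces
    · simp only [hS, hf, if_true]
      exact unifI_Iic hmem.2
    · by_cases ha : τ ∈ F.antifacets
      · simp only [hS, hf, ha, if_false, if_true]
        exact unifI_Ioi hmem.1
      · simp [hS, hf, ha]
  have hsub : F.faces ∪ F.antifacets ⊆ Finset.univ := Finset.subset_univ _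
  rw [show (∏ τ, unifI (S τ))
      = ∏ τ ∈ F.faces ∪ F.antifacets, unifI (S τ) from
    (Finset.prod_subset hsub (fun τ _ hτ => by
      simp only [Finset.mem_union, not_or] at hτ
      rw [hval τ, if_neg hτ.1, if_neg hτ.2])).symm]
  rw [Finset.prod_union hdisj.symm.symm]
  have h1 : ∏ τ ∈ F.faces, unifI (S τ) = ∏ τ ∈ F.faces, ENNReal.ofReal (w τ) :=
    Finset.prod_congr rfl fun τ hτ => by rw [hval τ, if_pos hτ]
  have h2 : ∏ τ ∈ F.antifacets, unifI (S τ)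
      = ∏ τ ∈ F.antifacets, ENNReal.ofReal (1 - w τ) :=
    Finset.prod_congr rfl fun τ hτ => by
      rw [hval τ, if_neg ((Finset.disjoint_right.mp hdisj) hτ), if_pos hτ]
  rw [h1, h2, ENNReal.ofReal_mul (Finset.prod_nonneg fun τ hτ => (W.mem_Icc _).1),
    ENNReal.ofReal_prod_of_nonneg (fun τ _ => (W.mem_Icc _).1),
    ENNReal.ofReal_prod_of_nonneg (fun τ _ => by
      have := (W.mem_Icc (τ.val.map x)).2; linarith)]

/-- The induced homomorphism density is the sampling
probability: `t_ind(F,W) = Pr{𝕂(n,W) = F}`. -/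
theorem indDensity_eq_sample_prob (n : ℕ) (F : SComplex (Fin n)) (W : Complexon) :
    indDensity F W.toFun =
      (((piUnif (Fin n)).prod (piUnif (Finset (Fin n))))
        {p | sampleFaces W.toFun n p.1 p.2 = F.faces}).toReal := by
  classical
  set f : (Fin n → ℝ) → ℝ := fun x =>
    (∏ σ ∈ F.faces, W.toFun (σ.val.map x)) *
      ∏ τ ∈ F.antifacets, (1 - W.toFun (τ.val.map x)) with hf
  have hfm : Measurable f :=
    (Finset.measurable_prod _ fun σ _ => complexon_measurable_face W σ).mul
      (Finset.measurable_prod _ fun τ _ =>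
        measurable_const.sub (complexon_measurable_face W τ))
  have hf0 : ∀ x, 0 ≤ f x := fun x =>
    mul_nonneg (Finset.prod_nonneg fun σ _ => (W.mem_Icc _).1)
      (Finset.prod_nonneg fun τ _ => by
        have := (W.mem_Icc (τ.val.map x)).2; linarith)
  set A : Set ((Fin n → ℝ) × (Finset (Fin n) → ℝ)) :=
    {p | (∀ σ ∈ F.faces, p.2 σ ≤ W.toFun (σ.val.map p.1)) ∧
      (∀ τ ∈ F.antifacets, W.toFun (τ.val.map p.1) < p.2 τ)} with hA
  have hsetEq : {p : (Fin n → ℝ) × (Finset (Fin n) → ℝ) |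
      sampleFaces W.toFun n p.1 p.2 = F.faces} = A := by
    ext p; exact sampleFaces_eq_iff F W.toFun p.1 p.2
  have hmeas : MeasurableSet A := by
    have : A = (⋂ σ ∈ F.faces,
          {p : (Fin n → ℝ) × (Finset (Fin n) → ℝ) |
            p.2 σ ≤ W.toFun (σ.val.map p.1)}) ∩
        (⋂ τ ∈ F.antifacets,
          {p : (Fin n → ℝ) × (Finset (Fin n) → ℝ) |
            W.toFun (τ.val.map p.1) < p.2 τ}) := by
      ext p
      simp only [hA, Set.mem_setOf_eq, Set.mem_inter_iff, Set.mem_iInter]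
    rw [this]
    refine MeasurableSet.inter ?_ ?_
    · exact MeasurableSet.biInter F.faces.countable_toSet fun σ _ =>
        measurableSet_le ((measurable_pi_apply σ).comp' measurable_snd)
          ((complexon_measurable_face W σ).comp' measurable_fst)
    · exact MeasurableSet.biInter F.antifacets.countable_toSet fun τ _ =>
        measurableSet_lt ((complexon_measurable_face W τ).comp' measurable_fst)
          ((measurable_pi_apply τ).comp' measurable_snd)
  rw [hsetEq, Measure.prod_apply hmeas]
  have hsec : ∀ x : Fin n → ℝ,
      piUnif (Finset (Fin n)) (Prod.mk x ⁻¹' A) = ENNReal.ofReal (f x) := by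
    intro x
    have hpre : Prod.mk x ⁻¹' A = {u : Finset (Fin n) → ℝ |
        (∀ σ ∈ F.faces, u σ ≤ W.toFun (σ.val.map x)) ∧
        (∀ τ ∈ F.antifacets, W.toFun (τ.val.map x) < u τ)} := rfl
    rw [hpre]
    exact section_measure F W x
  rw [lintegral_congr hsec, indDensity,
    integral_eq_lintegral_of_nonneg_ae (Filter.Eventually.of_forall hf0)
      hfm.aestronglyMeasurable]
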